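/- Let q ∈ k(x)[y] be square-free of degree r ≥ 1 in y with q_y = ∂q/∂y. For every a ∈ k(x)[y] with deg_y a < r, there exist unique polynomials A, ρ ∈ k(x)[y] of y-degree < r such that q_x·a = q·∂_y(A) − q_y·A + q·ρ, where q_x = ∂q/∂x; equivalently q_x a/q² = ∂_y(A/q) + ρ/q. Moreover, the square 2r×2r matrix M (over k(x), with polynomial entries in x when q ∈ k[x,y]) expressing the k(x)-linear map (A, ρ) ↦ q·∂_y(A) − q_y·A + q·ρ on coefficient vectors is invertible. -/

import Mathlib

open Polynomial

noncomputable section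

/-- Normalization on a field: every nonzero element normalizes to `1`. -/
noncomputable def fieldNormalizationMonoid (K : Type*) [Field K] : NormalizationMonoid K := by
  classical
  exact
  { normUnit := fun a => if h : a = 0 then 1 else (Units.mk0 a h)⁻¹
    normUnit_zero := dif_pos rfl
    normUnit_one := by
      rw [dif_neg one_ne_zero]
      exact Units.ext (by simp)
    normUnit_mul_units := fun {a} u ha => by
      rw [dif_neg (mul_ne_zero ha u.ne_zero), dif_neg ha]
      exact Units.ext (by
        simp only [Units.val_inv_eq_inv_val, Units.val_mk0, Units.val_mul, mul_inv_rev]) }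

attribute [local instance] fieldNormalizationMonoid

noncomputable local instance (K : Type*) [Field K] : NormalizedGCDMonoid (Polynomial K) :=
  UniqueFactorizationMonoid.toNormalizedGCDMonoid _

variable {k : Type*} [Field k] [CharZero k]

/-- The ℓ-th determinantal denominator of a rational matrix: the monic least common
denominator of all minors of size at most ℓ. -/
def detDen {n p : ℕ} (R : Matrix (Fin n) (Fin p) (RatFunc k)) (ℓ : ℕ) : Polynomial k :=
  (Finset.range (ℓ + 1)).lcm fun i =>
    (Finset.univ : Finset ((Fin i ↪ Fin n) × (Fin i ↪ Fin p))).lcm fun fg =>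
      (Matrix.det fun a b => R (fg.1 a) (fg.2 b)).denom

/-- Derivative of a rational function. -/
def rfDeriv (f : RatFunc k) : RatFunc k :=
  algebraMap (Polynomial k) (RatFunc k)
      (Polynomial.derivative f.num * f.denom - f.num * Polynomial.derivative f.denom) /
    algebraMap (Polynomial k) (RatFunc k) (f.denom ^ 2)

/-- The derivation `p(x) d/dx` on `k(x)`. -/
def pDeriv (p : Polynomial k) (f : RatFunc k) : RatFunc k :=
  algebraMap (Polynomial k) (RatFunc k) p * rfDeriv f

/-- Entrywise action of the derivation `p(x) d/dx` on vectors. -/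
def pDerivVec {n : ℕ} (p : Polynomial k) (v : Fin n → RatFunc k) : Fin n → RatFunc k :=
  fun i => pDeriv p (v i)

/-- The pseudo-linear map `θ = D + T` on `k(x)^n`, `θ(v) = D(v) + T v`. -/
def pseudoLinDiff {n : ℕ} (p : Polynomial k) (T : Matrix (Fin n) (Fin n) (RatFunc k))
    (v : Fin n → RatFunc k) : Fin n → RatFunc k :=
  pDerivVec p v + T.mulVec v

/-- The derivative with respect to `x` of a polynomial in `y` over `k(x)`
(coefficientwise derivative). -/
def derivX (q : Polynomial (RatFunc k)) : Polynomial (RatFunc k) :=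
  q.sum fun i a => Polynomial.C (rfDeriv a) * Polynomial.X ^ i

theorem hermite_aux {K : Type*} [Field K] (q : K[X]) (r : ℕ) (hr : 1 ≤ r)
    (hdeg : q.natDegree = r) (hsqf : IsCoprime q (derivative q)) :
    ∀ b : K[X], b.degree < ((2 * r : ℕ) : WithBot ℕ) →
      ∃! Aρ : K[X] × K[X],
        (Aρ.1.degree < (r : ℕ) ∧ Aρ.2.degree < (r : ℕ)) ∧
          q * derivative Aρ.1 - derivative q * Aρ.1 + q * Aρ.2 = b := by
  classical
  have hq0 : q ≠ 0 := by
    intro h; rw [h, natDegree_zero] at hdeg; omega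
  have hqdeg : q.degree = (r : WithBot ℕ) := by
    rw [degree_eq_natDegree hq0, hdeg]
  -- the raw linear map
  let Φ : (K[X] × K[X]) →ₗ[K] K[X] :=
    { toFun := fun Aρ => q * derivative Aρ.1 - derivative q * Aρ.1 + q * Aρ.2
      map_add' := fun x y => by
        simp only [Prod.fst_add, Prod.snd_add, derivative_add]; ring
      map_smul' := fun c x => by
        simp only [Prod.smul_fst, Prod.smul_snd, derivative_smul, RingHom.id_apply,
          smul_eq_C_mul, derivative_C_mul]; ring }
  have hmem : ∀ A ρ : K[X], A.degree < (r : ℕ) → ρ.degree < (r : ℕ) →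
      (q * derivative A - derivative q * A + q * ρ).degree < ((2 * r : ℕ) : WithBot ℕ) := by
    intro A ρ hA hρ
    have h1 : (q * derivative A).degree < ((2 * r : ℕ) : WithBot ℕ) := by
      calc (q * derivative A).degree ≤ q.degree + (derivative A).degree :=
            degree_mul_le _ _
        _ < (r : WithBot ℕ) + (r : WithBot ℕ) := by
            rw [hqdeg]
            exact WithBot.add_lt_add_left (by simp) (lt_of_le_of_lt degree_derivative_le hA)
        _ = ((2 * r : ℕ) : WithBot ℕ) := by rw [two_mul]; push_cast; ring
    have h2 : (derivative q * A).degree < ((2 * r : ℕ) : WithBot ℕ) := by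
      calc (derivative q * A).degree ≤ (derivative q).degree + A.degree :=
            degree_mul_le _ _
        _ ≤ q.degree + A.degree := add_le_add_left degree_derivative_le _
        _ < (r : WithBot ℕ) + (r : WithBot ℕ) := by
            rw [hqdeg]; exact WithBot.add_lt_add_left (by simp) hA
        _ = ((2 * r : ℕ) : WithBot ℕ) := by rw [two_mul]; push_cast; ring
    have h3 : (q * ρ).degree < ((2 * r : ℕ) : WithBot ℕ) := by
      calc (q * ρ).degree ≤ q.degree + ρ.degree := degree_mul_le _ _
        _ < (r : WithBot ℕ) + (r : WithBot ℕ) := by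
            rw [hqdeg]; exact WithBot.add_lt_add_left (by simp) hρ
        _ = ((2 * r : ℕ) : WithBot ℕ) := by rw [two_mul]; push_cast; ring
    exact lt_of_le_of_lt (degree_add_le _ _)
      (max_lt (lt_of_le_of_lt (degree_sub_le _ _) (max_lt h1 h2)) h3)
  let Φ' : (degreeLT K r × degreeLT K r) →ₗ[K] K[X] :=
    Φ.comp ((degreeLT K r).subtype.prodMap (degreeLT K r).subtype)
  have hmem' : ∀ x : degreeLT K r × degreeLT K r, Φ' x ∈ degreeLT K (2 * r) := by
    rintro ⟨⟨A, hA⟩, ⟨ρ, hρ⟩⟩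
    rw [Polynomial.mem_degreeLT] at hA hρ
    have := hmem A ρ hA hρ
    simpa [Φ', Φ, Polynomial.mem_degreeLT] using this
  let g : (degreeLT K r × degreeLT K r) →ₗ[K] degreeLT K (2 * r) :=
    Φ'.codRestrict _ hmem'
  -- injectivity
  have hker : ∀ A ρ : K[X], A.degree < (r : ℕ) → ρ.degree < (r : ℕ) →
      q * derivative A - derivative q * A + q * ρ = 0 → A = 0 ∧ ρ = 0 := by
    intro A ρ hA hρ heq
    have hdvd : q ∣ A * derivative q := ⟨derivative A + ρ, by linear_combination -heq⟩
    have hA0 : A = 0 :=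
      Polynomial.eq_zero_of_dvd_of_degree_lt (hsqf.dvd_of_dvd_mul_right hdvd) (by rwa [hqdeg])
    refine ⟨hA0, ?_⟩
    have h0 : q * ρ = 0 := by rw [hA0] at heq; simpa using heq
    rcases mul_eq_zero.mp h0 with h | h
    · exact absurd h hq0
    · exact h
  have hginj : Function.Injective g := by
    rw [← LinearMap.ker_eq_bot, LinearMap.ker_eq_bot']
    rintro ⟨⟨A, hA⟩, ⟨ρ, hρ⟩⟩ hz
    rw [Polynomial.mem_degreeLT] at hA hρ
    have hz' : q * derivative A - derivative q * A + q * ρ = 0 := by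
      have := congrArg Subtype.val hz
      simpa [g, Φ', Φ] using this
    obtain ⟨h1, h2⟩ := hker A ρ hA hρ hz'
    refine Prod.ext (Subtype.ext ?_) (Subtype.ext ?_) <;> simp [h1, h2]
  -- dimensions
  have hfinrank : ∀ n : ℕ, Module.finrank K (degreeLT K n) = n := fun n => by
    haveI : FiniteDimensional K (degreeLT K n) := (degreeLTEquiv K n).symm.finiteDimensional
    rw [(degreeLTEquiv K n).finrank_eq, Module.finrank_fin_fun]
  haveI : FiniteDimensional K (degreeLT K r) := (degreeLTEquiv K r).symm.finiteDimensional
  haveI : FiniteDimensional K (degreeLT K (2 * r)) :=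
    (degreeLTEquiv K (2 * r)).symm.finiteDimensional
  have hrank : Module.finrank K (degreeLT K r × degreeLT K r) =
      Module.finrank K (degreeLT K (2 * r)) := by
    rw [Module.finrank_prod, hfinrank, hfinrank]; ring
  have hgsurj : Function.Surjective g :=
    (LinearMap.injective_iff_surjective_of_finrank_eq_finrank hrank).mp hginj
  -- conclusion
  intro b hb
  obtain ⟨⟨⟨A, hA⟩, ⟨ρ, hρ⟩⟩, hgb⟩ := hgsurj ⟨b, Polynomial.mem_degreeLT.mpr hb⟩
  rw [Polynomial.mem_degreeLT] at hA hρ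
  have heq : q * derivative A - derivative q * A + q * ρ = b := by
    have := congrArg Subtype.val hgb
    simpa [g, Φ', Φ] using this
  refine ⟨(A, ρ), ⟨⟨hA, hρ⟩, heq⟩, ?_⟩
  rintro ⟨A', ρ'⟩ ⟨⟨hA', hρ'⟩, heq'⟩
  have hz : q * derivative (A' - A) - derivative q * (A' - A) + q * (ρ' - ρ) = 0 := by
    simp only [derivative_sub]; ring_nf; linear_combination heq' - heq
  have hdd : (A' - A).degree < (r : ℕ) := lt_of_le_of_lt (degree_sub_le _ _) (max_lt hA' hA)
  have hdd2 : (ρ' - ρ).degree < (r : ℕ) := lt_of_le_of_lt (degree_sub_le _ _) (max_lt hρ' hρ)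
  obtain ⟨h1, h2⟩ := hker _ _ hdd hdd2 hz
  have : A' = A := by linear_combination (norm := ring_nf) h1
  have h2' : ρ' = ρ := by linear_combination (norm := ring_nf) h2
  simp [Prod.ext_iff, this, h2']

/-- One step of Hermite reduction: for `q ∈ k(x)[y]` square-free of `y`-degree `r ≥ 1` and any
`a` with `deg_y a < r`, there are unique `A, ρ` of `y`-degree `< r` with
`q_x·a = q·∂_y(A) − q_y·A + q·ρ`; moreover the underlying `2r × 2r` linear map is invertible,
i.e. the same unique solvability holds for every right-hand side of `y`-degree `< 2r`. -/
theorem hermite_reduction_step (q : Polynomial (RatFunc k)) (r : ℕ) (hr : 1 ≤ r)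
    (hdeg : q.natDegree = r) (hsqf : IsCoprime q (Polynomial.derivative q)) :
    (∀ a : Polynomial (RatFunc k), a.degree < (r : ℕ) →
      ∃! Aρ : Polynomial (RatFunc k) × Polynomial (RatFunc k),
        (Aρ.1.degree < (r : ℕ) ∧ Aρ.2.degree < (r : ℕ)) ∧
          derivX q * a =
            q * Polynomial.derivative Aρ.1 - Polynomial.derivative q * Aρ.1 + q * Aρ.2) ∧
    (∀ b : Polynomial (RatFunc k), b.degree < ((2 * r : ℕ) : WithBot ℕ) →
      ∃! Aρ : Polynomial (RatFunc k) × Polynomial (RatFunc k),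
        (Aρ.1.degree < (r : ℕ) ∧ Aρ.2.degree < (r : ℕ)) ∧
          q * Polynomial.derivative Aρ.1 - Polynomial.derivative q * Aρ.1 + q * Aρ.2 = b) := by
  
  classical
  have hderivX : (derivX q).degree ≤ (r : WithBot ℕ) := by
    refine le_trans (Polynomial.degree_sum_le _ _) ?_
    refine Finset.sup_le fun i hi => ?_
    refine le_trans (Polynomial.degree_C_mul_X_pow_le _ _) ?_
    exact_mod_cast (Polynomial.le_natDegree_of_mem_supp i hi).trans hdeg.le
  have key := hermite_aux q r hr hdeg hsqf
  constructor
  · intro a ha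
    have hb : (derivX q * a).degree < ((2 * r : ℕ) : WithBot ℕ) := by
      calc (derivX q * a).degree ≤ (derivX q).degree + a.degree := degree_mul_le _ _
        _ ≤ (r : WithBot ℕ) + a.degree := add_le_add_left hderivX _
        _ < (r : WithBot ℕ) + (r : WithBot ℕ) := WithBot.add_lt_add_left (by simp) ha
        _ = ((2 * r : ℕ) : WithBot ℕ) := by rw [two_mul]; push_cast; ring
    obtain ⟨Aρ, ⟨hdegs, heq⟩, huniq⟩ := key _ hb
    exact ⟨Aρ, ⟨hdegs, heq.symm⟩, fun y hy => huniq y ⟨hy.1, hy.2.symm⟩⟩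
  · exact key
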